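/- Let Ω ⊂ ℝ^N be bounded open, and let v ∈ X₀ˢ(Ω) with v⁺ ≢ 0 and v⁻ ≢ 0 satisfy λ₂∫_Ω(v⁺)² dx ≥ ⟨v, v⁺⟩ and λ₂∫_Ω(v⁻)² dx ≥ −⟨v, v⁻⟩, where λ₂ is the second eigenvalue of the fractional Dirichlet Laplacian on Ω and ⟨u,w⟩ = (c_{N,s}/2)∬_{ℝ^N×ℝ^N}(u(x)-u(y))(w(x)-w(y))/|x-y|^{N+2s} dxdy. Then v is an eigenfunction associated with λ₂, and both inequalities are equalities. -/

import Mathlib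

open MeasureTheory

/-- The normalization constant `c_{N,s}`. -/
noncomputable def cNs (N : ℕ) (s : ℝ) : ℝ :=
  s * 2 ^ (2 * s) * Real.Gamma ((N + 2 * s) / 2) /
    (Real.pi ^ ((N : ℝ) / 2) * Real.Gamma (1 - s))

/-- The fractional Dirichlet form `⟨u, w⟩`. -/
noncomputable def form (N : ℕ) (s : ℝ) (u w : EuclideanSpace ℝ (Fin N) → ℝ) : ℝ :=
  cNs N s / 2 *
    ∫ x, ∫ y, (u x - u y) * (w x - w y) / ‖x - y‖ ^ ((N : ℝ) + 2 * s)

/-- The Gagliardo seminorm (squared), as an extended-real integral. -/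
noncomputable def gag (N : ℕ) (s : ℝ) (u : EuclideanSpace ℝ (Fin N) → ℝ) : ENNReal :=
  ∫⁻ x, ∫⁻ y, ENNReal.ofReal ((u x - u y) ^ 2 / ‖x - y‖ ^ ((N : ℝ) + 2 * s))

/-- Membership in `X₀ˢ(Ω)`: an `Hˢ` function vanishing a.e. outside `Ω`. -/
def memX0 (N : ℕ) (s : ℝ) (Ω : Set (EuclideanSpace ℝ (Fin N)))
    (u : EuclideanSpace ℝ (Fin N) → ℝ) : Prop :=
  MemLp u 2 volume ∧ gag N s u < ⊤ ∧ ∀ᵐ x, x ∉ Ω → u x = 0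

namespace SEC

abbrev Euc (N : ℕ) := EuclideanSpace ℝ (Fin N)

noncomputable def ker (N : ℕ) (s : ℝ) (z : Euc N × Euc N) : ℝ :=
  ‖z.1 - z.2‖ ^ ((N : ℝ) + 2 * s)

noncomputable def Fm (N : ℕ) (s : ℝ) (u w : Euc N → ℝ) (z : Euc N × Euc N) : ℝ :=
  (u z.1 - u z.2) * (w z.1 - w z.2) / ker N s z

noncomputable def Gm (N : ℕ) (s : ℝ) (u : Euc N → ℝ) (z : Euc N × Euc N) : ℝ :=
  (u z.1 - u z.2) ^ 2 / ker N s z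

noncomputable def pvol (N : ℕ) : Measure (Euc N × Euc N) :=
  (volume : Measure (Euc N)).prod volume

def good (N : ℕ) (s : ℝ) (u : Euc N → ℝ) : Prop :=
  AEStronglyMeasurable u (volume : Measure (Euc N)) ∧ gag N s u < ⊤

variable {N : ℕ} {s : ℝ}

theorem div_le_div_right_nonneg {a b k : ℝ} (h : a ≤ b) (hk : 0 ≤ k) : a / k ≤ b / k := by
  rcases eq_or_lt_of_le hk with h0 | h0
  · rw [← h0]; simp
  · exact (div_le_div_iff_of_pos_right h0).mpr h

theorem ker_nonneg (z : Euc N × Euc N) : 0 ≤ ker N s z :=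
  Real.rpow_nonneg (norm_nonneg _) _

theorem exp_nonneg (hs : 0 < s) : (0:ℝ) ≤ (N : ℝ) + 2 * s := by positivity

theorem measurable_ker (hs : 0 < s) : Measurable (ker N s) := by
  have : Continuous (fun x : ℝ => x ^ ((N : ℝ) + 2 * s)) :=
    Real.continuous_rpow_const (exp_nonneg hs)
  exact (this.comp ((continuous_fst.sub continuous_snd).norm)).measurable

theorem Gm_nonneg (u : Euc N → ℝ) (z : Euc N × Euc N) : 0 ≤ Gm N s u z :=
  div_nonneg (sq_nonneg _) (ker_nonneg z)

theorem aesm_Fm {u w : Euc N → ℝ} (hs : 0 < s)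
    (hu : AEStronglyMeasurable u volume) (hw : AEStronglyMeasurable w volume) :
    AEStronglyMeasurable (Fm N s u w) (pvol N) :=
  ((((hu.comp_fst.sub hu.comp_snd).mul (hw.comp_fst.sub hw.comp_snd)).aemeasurable).div
    (measurable_ker hs).aemeasurable).aestronglyMeasurable

theorem aesm_Gm {u : Euc N → ℝ} (hs : 0 < s)
    (hu : AEStronglyMeasurable u volume) :
    AEStronglyMeasurable (Gm N s u) (pvol N) := by
  refine ((((hu.comp_fst.sub hu.comp_snd).mul (hu.comp_fst.sub hu.comp_snd)).congr ?_).aemeasurable.div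
    (measurable_ker hs).aemeasurable).aestronglyMeasurable
  filter_upwards with z
  simp [sq]

theorem gag_eq {u : Euc N → ℝ} (hs : 0 < s) (hu : AEStronglyMeasurable u volume) :
    gag N s u = ∫⁻ z, ENNReal.ofReal (Gm N s u z) ∂(pvol N) := by
  unfold gag pvol
  rw [lintegral_prod _ (aesm_Gm hs hu).aemeasurable.ennreal_ofReal]
  rfl

theorem integrable_Gm {u : Euc N → ℝ} (hs : 0 < s) (hu : good N s u) :
    Integrable (Gm N s u) (pvol N) := by
  refine ⟨aesm_Gm hs hu.1, ?_⟩
  rw [hasFiniteIntegral_iff_ofReal (Filter.Eventually.of_forall (Gm_nonneg u)), ← gag_eq hs hu.1]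
  exact hu.2

theorem abs_Fm_le {u w : Euc N → ℝ} (z : Euc N × Euc N) :
    |Fm N s u w z| ≤ (Gm N s u z + Gm N s w z) / 2 := by
  have key : ∀ a b k : ℝ, 0 ≤ k → |a * b / k| ≤ (a ^ 2 / k + b ^ 2 / k) / 2 := by
    intro a b k hk
    rcases eq_or_lt_of_le hk with h0 | h0
    · rw [← h0]; simp
    have key2 : |a * b| ≤ (a ^ 2 + b ^ 2) / 2 := by
      rw [abs_mul]
      nlinarith [sq_nonneg (|a| - |b|), sq_abs a, sq_abs b, abs_nonneg a, abs_nonneg b]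
    calc |a * b / k| = |a * b| / k := by rw [abs_div, abs_of_pos h0]
      _ ≤ ((a ^ 2 + b ^ 2) / 2) / k := div_le_div_right_nonneg key2 h0.le
      _ = (a ^ 2 / k + b ^ 2 / k) / 2 := by ring
  exact key _ _ _ (ker_nonneg z)

theorem integrable_Fm {u w : Euc N → ℝ} (hs : 0 < s) (hu : good N s u) (hw : good N s w) :
    Integrable (Fm N s u w) (pvol N) := by
  refine Integrable.mono' (((integrable_Gm hs hu).add (integrable_Gm hs hw)).div_const 2)
    (aesm_Fm hs hu.1 hw.1) ?_
  filter_upwards with z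
  rw [Real.norm_eq_abs]
  exact abs_Fm_le z

theorem sq_le_sq_of_abs_le {x y : ℝ} (h : |x| ≤ |y|) : x ^ 2 ≤ y ^ 2 := by
  rw [← sq_abs x, ← sq_abs y]
  exact pow_le_pow_left₀ (abs_nonneg _) h 2

theorem form_eq_prod {u w : Euc N → ℝ} (hs : 0 < s) (hu : good N s u) (hw : good N s w) :
    form N s u w = cNs N s / 2 * ∫ z, Fm N s u w z ∂(pvol N) := by
  unfold form
  congr 1
  exact MeasureTheory.integral_integral
    (f := fun x y => (u x - u y) * (w x - w y) / ‖x - y‖ ^ ((N : ℝ) + 2 * s))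
    (integrable_Fm hs hu hw)

theorem form_comm (u w : Euc N → ℝ) : form N s u w = form N s w u := by
  have h : ∀ x y : Euc N, (u x - u y) * (w x - w y) = (w x - w y) * (u x - u y) :=
    fun _ _ => mul_comm _ _
  unfold form
  simp_rw [h]

theorem good_lin {u w : Euc N → ℝ} (hs : 0 < s) (hu : good N s u) (hw : good N s w)
    (a b : ℝ) : good N s (fun x => a * u x + b * w x) := by
  have haesm : AEStronglyMeasurable (fun x => a * u x + b * w x) (volume : Measure (Euc N)) :=
    (hu.1.const_mul a).add (hw.1.const_mul b)
  refine ⟨haesm, ?_⟩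
  rw [gag_eq hs haesm]
  have hpt : ∀ z, ENNReal.ofReal (Gm N s (fun x => a * u x + b * w x) z) ≤
      ENNReal.ofReal (2 * a ^ 2) * ENNReal.ofReal (Gm N s u z) +
      ENNReal.ofReal (2 * b ^ 2) * ENNReal.ofReal (Gm N s w z) := by
    intro z
    rw [← ENNReal.ofReal_mul (by positivity), ← ENNReal.ofReal_mul (by positivity)]
    refine le_trans (ENNReal.ofReal_le_ofReal ?_) ENNReal.ofReal_add_le
    unfold Gm
    have hnum : ((a * u z.1 + b * w z.1) - (a * u z.2 + b * w z.2)) ^ 2 ≤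
        2 * a ^ 2 * (u z.1 - u z.2) ^ 2 + 2 * b ^ 2 * (w z.1 - w z.2) ^ 2 := by
      nlinarith [sq_nonneg (a * (u z.1 - u z.2) - b * (w z.1 - w z.2)),
        sq_nonneg (a * (u z.1 - u z.2) + b * (w z.1 - w z.2))]
    calc ((a * u z.1 + b * w z.1) - (a * u z.2 + b * w z.2)) ^ 2 / ker N s z
        ≤ (2 * a ^ 2 * (u z.1 - u z.2) ^ 2 + 2 * b ^ 2 * (w z.1 - w z.2) ^ 2) / ker N s z :=
          div_le_div_right_nonneg hnum (ker_nonneg z)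
      _ = 2 * a ^ 2 * ((u z.1 - u z.2) ^ 2 / ker N s z) +
          2 * b ^ 2 * ((w z.1 - w z.2) ^ 2 / ker N s z) := by ring
  calc ∫⁻ z, ENNReal.ofReal (Gm N s (fun x => a * u x + b * w x) z) ∂(pvol N)
      ≤ ∫⁻ z, (ENNReal.ofReal (2 * a ^ 2) * ENNReal.ofReal (Gm N s u z) +
          ENNReal.ofReal (2 * b ^ 2) * ENNReal.ofReal (Gm N s w z)) ∂(pvol N) :=
        lintegral_mono hpt
    _ = ENNReal.ofReal (2 * a ^ 2) * ∫⁻ z, ENNReal.ofReal (Gm N s u z) ∂(pvol N) +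
        ENNReal.ofReal (2 * b ^ 2) * ∫⁻ z, ENNReal.ofReal (Gm N s w z) ∂(pvol N) := by
        rw [lintegral_add_left' ((aesm_Gm hs hu.1).aemeasurable.ennreal_ofReal.const_mul _),
          lintegral_const_mul'' _ (aesm_Gm hs hu.1).aemeasurable.ennreal_ofReal,
          lintegral_const_mul'' _ (aesm_Gm hs hw.1).aemeasurable.ennreal_ofReal]
    _ < ⊤ := by
        rw [← gag_eq hs hu.1, ← gag_eq hs hw.1]
        exact ENNReal.add_lt_top.mpr ⟨ENNReal.mul_lt_top ENNReal.ofReal_lt_top hu.2,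
          ENNReal.mul_lt_top ENNReal.ofReal_lt_top hw.2⟩

theorem good_congr_le {u w : Euc N → ℝ} (hs : 0 < s)
    (hw : AEStronglyMeasurable w (volume : Measure (Euc N))) (hu : good N s u)
    (hle : ∀ x y : Euc N, (w x - w y) ^ 2 ≤ (u x - u y) ^ 2) : good N s w := by
  refine ⟨hw, lt_of_le_of_lt ?_ hu.2⟩
  rw [gag_eq hs hw, gag_eq hs hu.1]
  refine lintegral_mono fun z => ENNReal.ofReal_le_ofReal ?_
  exact div_le_div_right_nonneg (hle z.1 z.2) (ker_nonneg z)

theorem good_pos_part {v : Euc N → ℝ} (hs : 0 < s) (hv : good N s v) :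
    good N s (fun x => max (v x) 0) := by
  refine good_congr_le hs (hv.1.aemeasurable.max aemeasurable_const).aestronglyMeasurable hv
    fun x y => ?_
  exact sq_le_sq_of_abs_le (abs_max_sub_max_le_abs (v x) (v y) 0)

theorem good_neg_part {v : Euc N → ℝ} (hs : 0 < s) (hv : good N s v) :
    good N s (fun x => max (-(v x)) 0) := by
  refine good_congr_le hs ((hv.1.neg.aemeasurable).max aemeasurable_const).aestronglyMeasurable hv
    fun x y => ?_
  refine sq_le_sq_of_abs_le ?_
  calc |max (-(v x)) 0 - max (-(v y)) 0| ≤ |(-(v x)) - (-(v y))| := abs_max_sub_max_le_abs _ _ 0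
    _ = |v x - v y| := by rw [neg_sub_neg, abs_sub_comm]



theorem form_lin_left {u w ξ : Euc N → ℝ} (hs : 0 < s) (hu : good N s u) (hw : good N s w)
    (hξ : good N s ξ) (a b : ℝ) :
    form N s (fun x => a * u x + b * w x) ξ = a * form N s u ξ + b * form N s w ξ := by
  rw [form_eq_prod hs (good_lin hs hu hw a b) hξ, form_eq_prod hs hu hξ, form_eq_prod hs hw hξ]
  have hpt : (Fm N s (fun x => a * u x + b * w x) ξ) =
      fun z => a * Fm N s u ξ z + b * Fm N s w ξ z := by
    funext z; unfold Fm; ring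
  rw [hpt, integral_add ((integrable_Fm hs hu hξ).const_mul a)
    ((integrable_Fm hs hw hξ).const_mul b), integral_const_mul, integral_const_mul]
  ring

theorem form_lin_right {u w ξ : Euc N → ℝ} (hs : 0 < s) (hu : good N s u) (hw : good N s w)
    (hξ : good N s ξ) (a b : ℝ) :
    form N s ξ (fun x => a * u x + b * w x) = a * form N s ξ u + b * form N s ξ w := by
  rw [form_comm, form_lin_left hs hu hw hξ a b, form_comm u ξ, form_comm w ξ]

theorem cNs_pos (hs : 0 < s) (hs1 : s < 1) : 0 < cNs N s := by
  unfold cNs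
  have h1 : 0 < Real.Gamma (((N : ℝ) + 2 * s) / 2) := Real.Gamma_pos_of_pos (by positivity)
  have h2 : 0 < Real.Gamma (1 - s) := Real.Gamma_pos_of_pos (by linarith)
  have h3 : (0:ℝ) < 2 ^ (2 * s) := Real.rpow_pos_of_pos (by norm_num) _
  have h4 : (0:ℝ) < Real.pi ^ ((N : ℝ) / 2) := Real.rpow_pos_of_pos Real.pi_pos _
  positivity

theorem form_self_eq {u : Euc N → ℝ} (hs : 0 < s) (hu : good N s u) :
    form N s u u = cNs N s / 2 * ∫ z, Gm N s u z ∂(pvol N) := by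
  rw [form_eq_prod hs hu hu]
  congr 1
  refine integral_congr_ae (Filter.Eventually.of_forall fun z => ?_)
  unfold Fm Gm
  rw [sq]

theorem form_self_nonneg {u : Euc N → ℝ} (hs : 0 < s) (hs1 : s < 1) (hu : good N s u) :
    0 ≤ form N s u u := by
  rw [form_self_eq hs hu]
  have hc := cNs_pos (N := N) hs hs1
  exact mul_nonneg (by linarith) (integral_nonneg (Gm_nonneg u))
theorem int_mul {f g : Euc N → ℝ} {μ : Measure (Euc N)} (hf : MemLp f 2 μ) (hg : MemLp g 2 μ) :
    Integrable (fun x => f x * g x) μ := by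
  refine Integrable.mono' ((hf.integrable_sq.add hg.integrable_sq).div_const 2)
    (hf.aestronglyMeasurable.mul hg.aestronglyMeasurable) ?_
  filter_upwards with x
  rw [Real.norm_eq_abs, abs_mul]
  simp only [Pi.add_apply]
  nlinarith [sq_nonneg (|f x| - |g x|), sq_abs (f x), sq_abs (g x), abs_nonneg (f x),
    abs_nonneg (g x)]

theorem integral_pos' {f : Euc N → ℝ} {μ : Measure (Euc N)} (hf : 0 ≤ᵐ[μ] f)
    (hfi : Integrable f μ) (hne : ¬ (f =ᵐ[μ] (0 : Euc N → ℝ))) : 0 < ∫ x, f x ∂μ := by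
  rw [integral_pos_iff_support_of_nonneg_ae hf hfi]
  by_contra h
  push_neg at h
  have h0 : μ (Function.support f) = 0 := nonpos_iff_eq_zero.mp h
  refine hne ?_
  have : ∀ᵐ x ∂μ, f x = 0 := by
    rw [ae_iff]
    simpa [Function.support] using h0
  filter_upwards [this] with x hx
  simpa using hx

theorem nontrivial_Euc (hN : 2 ≤ N) : Nontrivial (Euc N) := by
  refine ⟨⟨EuclideanSpace.single (⟨0, by omega⟩ : Fin N) (1 : ℝ), 0, fun h => ?_⟩⟩
  have := congrArg (· (⟨0, by omega⟩ : Fin N)) h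
  simp [EuclideanSpace.single] at this

theorem ae_ne_diag (hN : 2 ≤ N) : ∀ᵐ z ∂(pvol N), z.1 ≠ z.2 := by
  haveI : Nontrivial (Euc N) := nontrivial_Euc hN
  have hm : MeasurableSet {z : Euc N × Euc N | z.1 = z.2} :=
    measurableSet_eq_fun measurable_fst measurable_snd
  rw [ae_iff]
  have he : {z : Euc N × Euc N | ¬ z.1 ≠ z.2} = {z : Euc N × Euc N | z.1 = z.2} := by
    ext z; simp
  rw [he]
  unfold pvol
  rw [Measure.prod_apply hm]
  have hp : ∀ x : Euc N, (Prod.mk x ⁻¹' {z : Euc N × Euc N | z.1 = z.2}) = {x} := by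
    intro x; ext y
    simp [eq_comm]
  simp [hp]

theorem ae_fst {p : Euc N → Prop} (h : ∀ᵐ x, p x) : ∀ᵐ z ∂(pvol N), p z.1 :=
  Measure.quasiMeasurePreserving_fst.ae h

theorem ae_snd {p : Euc N → Prop} (h : ∀ᵐ x, p x) : ∀ᵐ z ∂(pvol N), p z.2 :=
  Measure.quasiMeasurePreserving_snd.ae h

theorem ker_pos {z : Euc N × Euc N} (hz : z.1 ≠ z.2) : 0 < ker N s z := by
  unfold ker
  have : 0 < ‖z.1 - z.2‖ := by
    rw [norm_pos_iff, sub_ne_zero]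
    exact hz
  exact Real.rpow_pos_of_pos this _
theorem div_le_div_left_nonneg {a b c : ℝ} (ha : 0 ≤ a) (hb : 0 < b) (hbc : b ≤ c) :
    a / c ≤ a / b := by gcongr

/-- A nonnegative L² function supported (a.e.) in a bounded set is integrable. -/
theorem integrable_of_bddsupp {p : Euc N → ℝ} {Ω : Set (Euc N)} {R : ℝ}
    (hp2 : MemLp p 2 (volume : Measure (Euc N)))
    (hΩR : Ω ⊆ Metric.closedBall 0 R) (hpΩ : ∀ᵐ x, x ∉ Ω → p x = 0) :
    Integrable p (volume : Measure (Euc N)) := by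
  haveI : IsFiniteMeasure ((volume : Measure (Euc N)).restrict (Metric.closedBall 0 R)) :=
    ⟨by rw [Measure.restrict_apply_univ]; exact measure_closedBall_lt_top⟩
  have hio : IntegrableOn p (Metric.closedBall 0 R) volume :=
    (hp2.restrict _).integrable (by norm_num)
  have hcongr : (Metric.closedBall (0 : Euc N) R).indicator p =ᵐ[volume] p := by
    filter_upwards [hpΩ] with x hx
    by_cases hxB : x ∈ Metric.closedBall (0 : Euc N) R
    · simp [Set.indicator_of_mem hxB]
    · rw [Set.indicator_of_notMem hxB]
      exact (hx fun hmem => hxB (hΩR hmem)).symm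
  exact ((integrable_indicator_iff measurableSet_closedBall).mpr hio).congr hcongr

theorem cross_neg {p m : Euc N → ℝ} {Ω : Set (Euc N)} (hN : 2 ≤ N) (hs : 0 < s) (hs1 : s < 1)
    (hΩb : Bornology.IsBounded Ω)
    (hp : good N s p) (hm : good N s m) (hp2 : MemLp p 2 volume) (hm2 : MemLp m 2 volume)
    (hpnn : ∀ x, 0 ≤ p x) (hmnn : ∀ x, 0 ≤ m x) (hpm : ∀ x, p x * m x = 0)
    (hp0 : ¬ (∀ᵐ x, p x = 0)) (hm0 : ¬ (∀ᵐ x, m x = 0))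
    (hpΩ : ∀ᵐ x, x ∉ Ω → p x = 0) (hmΩ : ∀ᵐ x, x ∉ Ω → m x = 0) :
    form N s p m < 0 := by
  obtain ⟨R0, hR0⟩ := hΩb.subset_closedBall 0
  set R : ℝ := max R0 1 with hRdef
  have hR1 : (1:ℝ) ≤ R := le_max_right _ _
  have hΩR : Ω ⊆ Metric.closedBall 0 R :=
    hR0.trans (Metric.closedBall_subset_closedBall (le_max_left _ _))
  set Kmax : ℝ := (2 * R) ^ ((N : ℝ) + 2 * s) with hKdef
  have hKpos : 0 < Kmax := Real.rpow_pos_of_pos (by linarith) _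
  -- global integrability
  have hpInt : Integrable p volume := integrable_of_bddsupp hp2 hΩR hpΩ
  have hmInt : Integrable m volume := integrable_of_bddsupp hm2 hΩR hmΩ
  -- positive integrals
  have hIp : 0 < ∫ x, p x := by
    refine integral_pos' (Filter.Eventually.of_forall hpnn) hpInt fun h => hp0 ?_
    filter_upwards [h] with x hx using by simpa using hx
  have hIm : 0 < ∫ x, m x := by
    refine integral_pos' (Filter.Eventually.of_forall hmnn) hmInt fun h => hm0 ?_
    filter_upwards [h] with x hx using by simpa using hx
  -- the functions
  set L : Euc N × Euc N → ℝ := fun z => p z.1 * m z.2 / Kmax with hLdef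
  set U : Euc N × Euc N → ℝ := fun z => p z.1 * m z.2 / ker N s z with hUdef
  set S : Euc N × Euc N → ℝ := fun z => (p z.1 * m z.2 + p z.2 * m z.1) / ker N s z with hSdef
  have hFmS : Fm N s p m = fun z => -S z := by
    funext z
    unfold Fm
    rw [hSdef]
    have h1 := hpm z.1
    have h2 := hpm z.2
    have : (p z.1 - p z.2) * (m z.1 - m z.2) = -(p z.1 * m z.2 + p z.2 * m z.1) := by
      nlinarith [h1, h2]
    rw [this, neg_div]
  have hSint : Integrable S (pvol N) := by
    have := (integrable_Fm hs hp hm).neg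
    refine this.congr ?_
    filter_upwards with z
    rw [hFmS]
    simp
  have hUle : ∀ z, U z ≤ S z := by
    intro z
    refine div_le_div_right_nonneg ?_ (ker_nonneg z)
    nlinarith [mul_nonneg (hpnn z.2) (hmnn z.1)]
  have hUnn : ∀ z, 0 ≤ U z :=
    fun z => div_nonneg (mul_nonneg (hpnn z.1) (hmnn z.2)) (ker_nonneg z)
  have hUaesm : AEStronglyMeasurable U (pvol N) :=
    (((hp.1.comp_fst.aemeasurable.mul hm.1.comp_snd.aemeasurable)).div
      (measurable_ker hs).aemeasurable).aestronglyMeasurable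
  have hUint : Integrable U (pvol N) := by
    refine Integrable.mono' hSint hUaesm ?_
    filter_upwards with z
    rw [Real.norm_eq_abs, abs_of_nonneg (hUnn z)]
    exact hUle z
  have hLint : Integrable L (pvol N) := (Integrable.mul_prod hpInt hmInt).div_const Kmax
  -- a.e. comparison  L ≤ U
  have hLU : ∀ᵐ z ∂(pvol N), L z ≤ U z := by
    filter_upwards [ae_fst hpΩ, ae_snd hmΩ, ae_ne_diag hN] with z hz1 hz2 hzne
    rcases eq_or_ne (p z.1 * m z.2) 0 with h0 | h0
    · rw [hLdef, hUdef]; simp only [h0, zero_div]; exact le_refl 0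
    have hz1Ω : z.1 ∈ Ω := by
      by_contra hc
      exact h0 (by rw [hz1 hc, zero_mul])
    have hz2Ω : z.2 ∈ Ω := by
      by_contra hc
      exact h0 (by rw [hz2 hc, mul_zero])
    have hnorm : ‖z.1 - z.2‖ ≤ 2 * R := by
      have h1 : ‖z.1‖ ≤ R := mem_closedBall_zero_iff.mp (hΩR hz1Ω)
      have h2 : ‖z.2‖ ≤ R := mem_closedBall_zero_iff.mp (hΩR hz2Ω)
      calc ‖z.1 - z.2‖ ≤ ‖z.1‖ + ‖z.2‖ := norm_sub_le _ _
        _ ≤ 2 * R := by linarith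
    have hkle : ker N s z ≤ Kmax :=
      Real.rpow_le_rpow (norm_nonneg _) hnorm (exp_nonneg hs)
    exact div_le_div_left_nonneg (mul_nonneg (hpnn z.1) (hmnn z.2)) (ker_pos hzne) hkle
  have hIL : ∫ z, L z ∂(pvol N) = (∫ x, p x) * (∫ x, m x) / Kmax := by
    rw [hLdef]
    simp only [div_eq_mul_inv]
    rw [integral_mul_const]
    congr 1
    exact integral_prod_mul p m
  have hIU : 0 < ∫ z, U z ∂(pvol N) := by
    calc (0:ℝ) < (∫ x, p x) * (∫ x, m x) / Kmax := by positivity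
      _ = ∫ z, L z ∂(pvol N) := hIL.symm
      _ ≤ ∫ z, U z ∂(pvol N) := integral_mono_ae hLint hUint hLU
  have hIS : 0 < ∫ z, S z ∂(pvol N) :=
    lt_of_lt_of_le hIU (integral_mono hUint hSint hUle)
  rw [form_eq_prod hs hp hm, hFmS]
  rw [integral_neg]
  have hc := cNs_pos (N := N) hs hs1
  have : 0 < cNs N s / 2 * ∫ z, S z ∂(pvol N) := by positivity
  linarith

theorem form_self_ne_zero {φ : Euc N → ℝ} {Ω : Set (Euc N)} (hN : 2 ≤ N) (hs : 0 < s)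
    (hs1 : s < 1) (hΩb : Bornology.IsBounded Ω) (hΩpos : 0 < volume Ω)
    (hφ : good N s φ) (hφΩ : ∀ᵐ x, x ∉ Ω → φ x = 0) (hφpos : ∀ x ∈ Ω, 0 < φ x) :
    form N s φ φ ≠ 0 := by
  intro h0
  haveI : Nontrivial (Euc N) := nontrivial_Euc hN
  rw [form_self_eq hs hφ] at h0
  have hc := cNs_pos (N := N) hs hs1
  have hint0 : ∫ z, Gm N s φ z ∂(pvol N) = 0 := by
    rcases mul_eq_zero.mp h0 with h | h
    · exfalso; linarith
    · exact h
  have hae0 : ∀ᵐ z ∂(pvol N), Gm N s φ z = 0 := by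
    have := (integral_eq_zero_iff_of_nonneg (Gm_nonneg φ) (integrable_Gm hs hφ)).mp hint0
    filter_upwards [this] with z hz using by simpa using hz
  have haeeq : ∀ᵐ z ∂(pvol N), φ z.1 = φ z.2 := by
    filter_upwards [hae0, ae_ne_diag hN] with z hz hzne
    have hkp := ker_pos (s := s) hzne
    rcases div_eq_zero_iff.mp hz with h | h
    · have := pow_eq_zero_iff (n := 2) (by norm_num) |>.mp h
      linarith [sub_eq_zero.mp this]
    · exfalso; linarith
  have hiter : ∀ᵐ x : Euc N, ∀ᵐ y : Euc N, φ x = φ y := Measure.ae_ae_of_ae_prod haeeq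
  -- complement of Ω has positive measure
  obtain ⟨R0, hR0⟩ := hΩb.subset_closedBall 0
  set R : ℝ := max R0 0 with hRdef
  have hΩR : Ω ⊆ Metric.closedBall 0 R :=
    hR0.trans (Metric.closedBall_subset_closedBall (le_max_left _ _))
  have hcpos : 0 < volume Ωᶜ := by
    set x0 : Euc N := EuclideanSpace.single (⟨0, by omega⟩ : Fin N) (R + 2) with hx0
    have hx0norm : ‖x0‖ = |R + 2| := EuclideanSpace.norm_single _ _
    have hsub : Metric.ball x0 1 ⊆ Ωᶜ := by
      intro y hy
      intro hyΩ
      have h1 : ‖y‖ ≤ R := mem_closedBall_zero_iff.mp (hΩR hyΩ)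
      have h2 : ‖x0 - y‖ < 1 := by
        rw [← dist_eq_norm]
        exact Metric.mem_ball'.mp hy
      have h3 : ‖x0‖ ≤ ‖y‖ + ‖x0 - y‖ := norm_le_insert' _ _
      rw [hx0norm, abs_of_pos (by linarith [le_max_right R0 (0:ℝ)])] at h3
      linarith [le_max_right R0 (0:ℝ)]
    calc (0:ENNReal) < volume (Metric.ball x0 1) := Metric.measure_ball_pos _ _ (by norm_num)
      _ ≤ volume Ωᶜ := measure_mono hsub
  haveI : (ae (volume : Measure (Euc N))).NeBot := by
    refine ae_neBot.mpr fun hcon => ?_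
    rw [hcon] at hΩpos
    simp at hΩpos
  obtain ⟨x0, hx0⟩ := hiter.exists
  rcases eq_or_ne (φ x0) 0 with hz | hz
  · -- φ vanishes a.e., contradicting positivity on Ω
    have : ∀ᵐ y : Euc N, y ∉ Ω := by
      filter_upwards [hx0] with y hy
      intro hyΩ
      have := hφpos y hyΩ
      rw [hy] at hz
      linarith
    rw [ae_iff] at this
    simp only [not_not] at this
    have : volume Ω = 0 := by
      simpa using this
    rw [this] at hΩpos
    simp at hΩpos
  · -- φ equals a nonzero constant a.e., contradicting vanishing outside Ω
    have : ∀ᵐ y : Euc N, y ∈ Ω := by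
      filter_upwards [hx0, hφΩ] with y hy hyΩ
      by_contra hc
      rw [hyΩ hc] at hy
      exact hz hy
    rw [ae_iff] at this
    have : volume Ωᶜ = 0 := by
      simpa [Set.compl_def] using this
    rw [this] at hcpos
    simp at hcpos
theorem form_smul_left {u ξ : Euc N → ℝ} (hs : 0 < s) (hu : good N s u) (hξ : good N s ξ)
    (a : ℝ) : form N s (fun x => a * u x) ξ = a * form N s u ξ := by
  have h : (fun x => a * u x) = fun x => a * u x + 0 * u x := by funext x; ring
  rw [h, form_lin_left hs hu hu hξ a 0]
  ring

set_option maxHeartbeats 2000000 in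
theorem main_aux {N : ℕ} (hN : 2 ≤ N) {s : ℝ}
    (hs0 : 0 < s) (hs1 : s < 1) {Ω : Set (EuclideanSpace ℝ (Fin N))}
    (hΩo : IsOpen Ω) (hΩb : Bornology.IsBounded Ω)
    {φ₁ : EuclideanSpace ℝ (Fin N) → ℝ} {lam1 lam2 : ℝ}
    (hφ₁X : memX0 N s Ω φ₁) (hφ₁pos : ∀ x ∈ Ω, 0 < φ₁ x)
    (hφ₁eig : ∀ ξ, memX0 N s Ω ξ → form N s φ₁ ξ = lam1 * ∫ x in Ω, φ₁ x * ξ x)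
    (hlam2 : lam2 = sInf {t : ℝ | ∃ u, memX0 N s Ω u ∧ ¬ (∀ᵐ x, u x = 0) ∧
      form N s u φ₁ = 0 ∧ t = form N s u u / ∫ x in Ω, (u x) ^ 2})
    (v p m : EuclideanSpace ℝ (Fin N) → ℝ)
    (hvX : memX0 N s Ω v) (hpX : memX0 N s Ω p) (hmX : memX0 N s Ω m)
    (hvpm : ∀ x, v x = p x - m x)
    (hpnn : ∀ x, 0 ≤ p x) (hmnn : ∀ x, 0 ≤ m x) (hpm0 : ∀ x, p x * m x = 0)
    (hp0 : ¬ (∀ᵐ x, p x = 0)) (hm0 : ¬ (∀ᵐ x, m x = 0))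
    (h1 : form N s v p ≤ lam2 * ∫ x in Ω, (p x) ^ 2)
    (h2 : -form N s v m ≤ lam2 * ∫ x in Ω, (m x) ^ 2) :
    (∀ ξ, memX0 N s Ω ξ → form N s v ξ = lam2 * ∫ x in Ω, v x * ξ x) ∧
    form N s v p = lam2 * ∫ x in Ω, (p x) ^ 2 ∧
    -form N s v m = lam2 * ∫ x in Ω, (m x) ^ 2 := by
  have hΩm : MeasurableSet Ω := hΩo.measurableSet
  have hcN := cNs_pos (N := N) hs0 hs1
  have hφg : good N s φ₁ := ⟨hφ₁X.1.aestronglyMeasurable, hφ₁X.2.1⟩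
  have hvg : good N s v := ⟨hvX.1.aestronglyMeasurable, hvX.2.1⟩
  have hpg : good N s p := ⟨hpX.1.aestronglyMeasurable, hpX.2.1⟩
  have hmg : good N s m := ⟨hmX.1.aestronglyMeasurable, hmX.2.1⟩
  -- positive measure of Ω
  have hΩpos : 0 < volume Ω := by
    by_contra hc
    push_neg at hc
    have h0 : volume Ω = 0 := nonpos_iff_eq_zero.mp hc
    have hae : ∀ᵐ x : EuclideanSpace ℝ (Fin N), x ∉ Ω := by
      rw [ae_iff]; simpa [not_not] using h0
    exact hp0 (by filter_upwards [hae, hpX.2.2] with x hx1 hx2 using hx2 hx1)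
  -- positivity helper
  have pos_of : ∀ f : EuclideanSpace ℝ (Fin N) → ℝ,
      (0 ≤ᵐ[volume.restrict Ω] f) → Integrable f (volume.restrict Ω) →
      (¬ ∀ᵐ x ∂(volume.restrict Ω), f x = 0) → 0 < ∫ x in Ω, f x := by
    intro f hnn hint hne
    refine integral_pos' hnn hint fun h => hne ?_
    filter_upwards [h] with x hx using by simpa using hx
  -- from restricted a.e. vanishing to global, for functions vanishing outside Ω
  have glob : ∀ f : EuclideanSpace ℝ (Fin N) → ℝ, (∀ᵐ x, x ∉ Ω → f x = 0) →
      (∀ᵐ x ∂(volume.restrict Ω), f x = 0) → ∀ᵐ x : EuclideanSpace ℝ (Fin N), f x = 0 := by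
    intro f hout hin
    rw [ae_restrict_iff' hΩm] at hin
    filter_upwards [hin, hout] with x hx1 hx2
    by_cases hxΩ : x ∈ Ω
    · exact hx1 hxΩ
    · exact hx2 hxΩ
  -- basic quantities
  have hp2r : MemLp p 2 (volume.restrict Ω) := hpX.1.restrict Ω
  have hm2r : MemLp m 2 (volume.restrict Ω) := hmX.1.restrict Ω
  have hv2r : MemLp v 2 (volume.restrict Ω) := hvX.1.restrict Ω
  have hφ2r : MemLp φ₁ 2 (volume.restrict Ω) := hφ₁X.1.restrict Ω
  have ha : 0 < ∫ x in Ω, (p x) ^ 2 := by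
    refine pos_of _ (Filter.Eventually.of_forall fun x => sq_nonneg _) hp2r.integrable_sq ?_
    intro h
    refine hp0 (glob p hpX.2.2 ?_)
    filter_upwards [h] with x hx
    exact pow_eq_zero_iff (two_ne_zero) |>.mp hx
  have hb : 0 < ∫ x in Ω, (m x) ^ 2 := by
    refine pos_of _ (Filter.Eventually.of_forall fun x => sq_nonneg _) hm2r.integrable_sq ?_
    intro h
    refine hm0 (glob m hmX.2.2 ?_)
    filter_upwards [h] with x hx
    exact pow_eq_zero_iff (two_ne_zero) |>.mp hx
  have hφsqpos : 0 < ∫ x in Ω, φ₁ x * φ₁ x := by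
    refine pos_of _ ?_ (int_mul hφ2r hφ2r) ?_
    · filter_upwards [ae_restrict_mem hΩm] with x hx
      exact mul_self_nonneg _
    · intro h
      have hFalse : ∀ᵐ x ∂(volume.restrict Ω), False := by
        filter_upwards [h, ae_restrict_mem hΩm] with x hx hxΩ
        nlinarith [hφ₁pos x hxΩ]
      rw [ae_iff] at hFalse
      have huniv : (volume.restrict Ω) Set.univ = 0 := by simpa using hFalse
      rw [Measure.restrict_apply_univ] at huniv
      exact hΩpos.ne' huniv
  have halpha : 0 < ∫ x in Ω, φ₁ x * m x := by
    refine pos_of _ ?_ (int_mul hφ2r hm2r) ?_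
    · filter_upwards [ae_restrict_mem hΩm] with x hx
      exact mul_nonneg (hφ₁pos x hx).le (hmnn x)
    · intro h
      refine hm0 (glob m hmX.2.2 ?_)
      filter_upwards [h, ae_restrict_mem hΩm] with x hx hxΩ
      rcases mul_eq_zero.mp hx with h' | h'
      · exact absurd h' (hφ₁pos x hxΩ).ne'
      · exact h'
  have hbeta : 0 < ∫ x in Ω, φ₁ x * p x := by
    refine pos_of _ ?_ (int_mul hφ2r hp2r) ?_
    · filter_upwards [ae_restrict_mem hΩm] with x hx
      exact mul_nonneg (hφ₁pos x hx).le (hpnn x)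
    · intro h
      refine hp0 (glob p hpX.2.2 ?_)
      filter_upwards [h, ae_restrict_mem hΩm] with x hx hxΩ
      rcases mul_eq_zero.mp hx with h' | h'
      · exact absurd h' (hφ₁pos x hxΩ).ne'
      · exact h'
  set α : ℝ := ∫ x in Ω, φ₁ x * m x with hαdef
  set β : ℝ := ∫ x in Ω, φ₁ x * p x with hβdef
  -- the test function w
  set w : EuclideanSpace ℝ (Fin N) → ℝ := fun x => α * p x + (-β) * m x with hwdef
  have hwg : good N s w := good_lin hs0 hpg hmg α (-β)
  have hwX : memX0 N s Ω w := by
    refine ⟨?_, hwg.2, ?_⟩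
    · exact (hpX.1.const_mul α).add (hmX.1.const_mul (-β))
    · filter_upwards [hpX.2.2, hmX.2.2] with x hx1 hx2 hxΩ
      rw [hwdef]
      simp only
      rw [hx1 hxΩ, hx2 hxΩ]
      ring
  have hwφ : form N s w φ₁ = 0 := by
    rw [hwdef, form_lin_left hs0 hpg hmg hφg α (-β), form_comm p φ₁, form_comm m φ₁,
      hφ₁eig p hpX, hφ₁eig m hmX, ← hαdef, ← hβdef]
    ring
  -- expansions
  have hMw : ∫ x in Ω, (w x) ^ 2 = α ^ 2 * (∫ x in Ω, (p x) ^ 2) + β ^ 2 * ∫ x in Ω, (m x) ^ 2 := by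
    have hpt : ∀ x, (w x) ^ 2 = α ^ 2 * (p x) ^ 2 + β ^ 2 * (m x) ^ 2 := by
      intro x
      rw [hwdef]
      simp only
      linear_combination (-2 * α * β) * hpm0 x
    calc ∫ x in Ω, (w x) ^ 2 = ∫ x in Ω, (α ^ 2 * (p x) ^ 2 + β ^ 2 * (m x) ^ 2) := by
          simp only [hpt]
      _ = _ := by
          rw [integral_add (hp2r.integrable_sq.const_mul _) (hm2r.integrable_sq.const_mul _),
            integral_const_mul, integral_const_mul]
  have hMwpos : 0 < ∫ x in Ω, (w x) ^ 2 := by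
    rw [hMw]
    have k1 : 0 < α ^ 2 * (∫ x in Ω, (p x) ^ 2) := mul_pos (pow_pos halpha 2) ha
    have k2 : 0 ≤ β ^ 2 * ∫ x in Ω, (m x) ^ 2 := mul_nonneg (sq_nonneg _) hb.le
    linarith
  have hQw : form N s w w = α ^ 2 * form N s p p + β ^ 2 * form N s m m
      + 2 * α * (-β) * form N s p m := by
    rw [hwdef, form_lin_left hs0 hpg hmg (good_lin hs0 hpg hmg α (-β)) α (-β),
      form_lin_right hs0 hpg hmg hpg α (-β), form_lin_right hs0 hpg hmg hmg α (-β),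
      form_comm m p]
    ring
  -- cross term strictly negative
  have hC : form N s p m < 0 :=
    cross_neg hN hs0 hs1 hΩb hpg hmg hpX.1 hmX.1 hpnn hmnn hpm0 hp0 hm0 hpX.2.2 hmX.2.2
  -- splitting of v
  have hsplit : ∀ ξ : EuclideanSpace ℝ (Fin N) → ℝ, good N s ξ →
      form N s v ξ = form N s p ξ - form N s m ξ := by
    intro ξ hξ
    have hveq : v = fun x => 1 * p x + (-1) * m x := by
      funext x; rw [hvpm x]; ring
    rw [hveq, form_lin_left hs0 hpg hmg hξ 1 (-1)]
    ring
  have h1' : form N s p p - form N s p m ≤ lam2 * ∫ x in Ω, (p x) ^ 2 := by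
    have hh := hsplit p hpg
    rw [form_comm m p] at hh
    linarith [h1]
  have h2' : form N s m m - form N s p m ≤ lam2 * ∫ x in Ω, (m x) ^ 2 := by
    have hh := hsplit m hmg
    linarith [h2]
  -- chain inequality
  have hchainQ : form N s w w ≤ lam2 * ∫ x in Ω, (w x) ^ 2 := by
    rw [hQw, hMw]
    have k1 : α ^ 2 * (form N s p p - form N s p m) ≤ α ^ 2 * (lam2 * ∫ x in Ω, (p x) ^ 2) :=
      mul_le_mul_of_nonneg_left h1' (sq_nonneg α)
    have k2 : β ^ 2 * (form N s m m - form N s p m) ≤ β ^ 2 * (lam2 * ∫ x in Ω, (m x) ^ 2) :=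
      mul_le_mul_of_nonneg_left h2' (sq_nonneg β)
    have k3 : (α - β) ^ 2 * (- form N s p m) ≥ 0 :=
      mul_nonneg (sq_nonneg _) (by linarith)
    nlinarith [k1, k2, k3]
  -- the sInf bound
  have hwne : ¬ (∀ᵐ x : EuclideanSpace ℝ (Fin N), w x = 0) := by
    intro h
    have : ∫ x in Ω, (w x) ^ 2 = 0 := by
      have h' : ∀ᵐ x ∂(volume.restrict Ω), (w x) ^ 2 = (0 : ℝ) := by
        filter_upwards [ae_restrict_of_ae h] with x hx
        rw [hx]; ring
      rw [integral_congr_ae h']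
      simp
    linarith
  have hbdd : BddBelow {t : ℝ | ∃ u, memX0 N s Ω u ∧ ¬ (∀ᵐ x, u x = 0) ∧
      form N s u φ₁ = 0 ∧ t = form N s u u / ∫ x in Ω, (u x) ^ 2} := by
    refine ⟨0, ?_⟩
    rintro t ⟨u, huX, hu0, huφ, rfl⟩
    exact div_nonneg (form_self_nonneg hs0 hs1 ⟨huX.1.aestronglyMeasurable, huX.2.1⟩)
      (integral_nonneg fun x => sq_nonneg _)
  have hlow : lam2 * ∫ x in Ω, (w x) ^ 2 ≤ form N s w w := by
    have hmem : (form N s w w / ∫ x in Ω, (w x) ^ 2) ∈ {t : ℝ | ∃ u, memX0 N s Ω u ∧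
        ¬ (∀ᵐ x, u x = 0) ∧ form N s u φ₁ = 0 ∧ t = form N s u u / ∫ x in Ω, (u x) ^ 2} :=
      ⟨w, hwX, hwne, hwφ, rfl⟩
    have h := csInf_le hbdd hmem
    rw [← hlam2] at h
    exact (le_div_iff₀ hMwpos).mp h
  have heq : form N s w w = lam2 * ∫ x in Ω, (w x) ^ 2 := le_antisymm hchainQ hlow
  -- extract equalities
  have hsum : α ^ 2 * (lam2 * (∫ x in Ω, (p x) ^ 2) - (form N s p p - form N s p m))
      + β ^ 2 * (lam2 * (∫ x in Ω, (m x) ^ 2) - (form N s m m - form N s p m))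
      + (α - β) ^ 2 * (- form N s p m) = 0 := by
    linear_combination (-1 : ℝ) * heq + hQw - lam2 * hMw
  have ht1 : (0:ℝ) ≤ α ^ 2 * (lam2 * (∫ x in Ω, (p x) ^ 2) - (form N s p p - form N s p m)) :=
    mul_nonneg (sq_nonneg _) (by linarith)
  have ht2 : (0:ℝ) ≤ β ^ 2 * (lam2 * (∫ x in Ω, (m x) ^ 2) - (form N s m m - form N s p m)) :=
    mul_nonneg (sq_nonneg _) (by linarith)
  have ht3 : (0:ℝ) ≤ (α - β) ^ 2 * (- form N s p m) :=
    mul_nonneg (sq_nonneg _) (by linarith)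
  have hz1 : lam2 * (∫ x in Ω, (p x) ^ 2) - (form N s p p - form N s p m) = 0 := by
    have h0 : α ^ 2 * (lam2 * (∫ x in Ω, (p x) ^ 2) - (form N s p p - form N s p m)) = 0 := by
      linarith
    rcases mul_eq_zero.mp h0 with h | h
    · exact absurd h (by positivity)
    · exact h
  have hz2 : lam2 * (∫ x in Ω, (m x) ^ 2) - (form N s m m - form N s p m) = 0 := by
    have h0 : β ^ 2 * (lam2 * (∫ x in Ω, (m x) ^ 2) - (form N s m m - form N s p m)) = 0 := by
      linarith
    rcases mul_eq_zero.mp h0 with h | h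
    · exact absurd h (by positivity)
    · exact h
  have hαβ : α = β := by
    have h0 : (α - β) ^ 2 * (- form N s p m) = 0 := by linarith
    rcases mul_eq_zero.mp h0 with h | h
    · have := pow_eq_zero_iff (two_ne_zero) |>.mp h
      linarith [sub_eq_zero.mp this]
    · linarith
  -- conclusions 2 and 3
  have concl2 : form N s v p = lam2 * ∫ x in Ω, (p x) ^ 2 := by
    have hh := hsplit p hpg
    rw [form_comm m p] at hh
    linarith
  have concl3 : -form N s v m = lam2 * ∫ x in Ω, (m x) ^ 2 := by
    have hh := hsplit m hmg
    linarith
  refine ⟨?_, concl2, concl3⟩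
  -- Part 1: the eigenvalue equation for arbitrary test functions
  have hαβ' := hαβ
  have hvφ : form N s v φ₁ = 0 := by
    have hwv : w = fun x => α * v x := by
      funext x
      rw [hwdef]
      simp only
      rw [hvpm x, ← hαβ]
      ring
    have h0 : form N s w φ₁ = α * form N s v φ₁ := by
      rw [hwv, form_smul_left hs0 hvg hφg α]
    rw [hwφ] at h0
    rcases mul_eq_zero.mp h0.symm with h | h
    · exact absurd h halpha.ne'
    · exact h
  have hlam1ne : lam1 ≠ 0 := by
    intro h0
    have hh := hφ₁eig φ₁ hφ₁X
    rw [h0, zero_mul] at hh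
    exact form_self_ne_zero hN hs0 hs1 hΩb hΩpos hφg hφ₁X.2.2 hφ₁pos hh
  have hintφv : ∫ x in Ω, φ₁ x * v x = 0 := by
    have hh := hφ₁eig v hvX
    rw [form_comm φ₁ v, hvφ] at hh
    rcases mul_eq_zero.mp hh.symm with h | h
    · exact absurd h hlam1ne
    · exact h
  have hv2 : ∫ x in Ω, (v x) ^ 2 = (∫ x in Ω, (p x) ^ 2) + ∫ x in Ω, (m x) ^ 2 := by
    have hpt : ∀ x, (v x) ^ 2 = (p x) ^ 2 + (m x) ^ 2 := by
      intro x
      rw [hvpm x]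
      linear_combination (-2 : ℝ) * hpm0 x
    calc ∫ x in Ω, (v x) ^ 2 = ∫ x in Ω, ((p x) ^ 2 + (m x) ^ 2) := by simp only [hpt]
      _ = _ := integral_add hp2r.integrable_sq hm2r.integrable_sq
  have hMv : 0 < ∫ x in Ω, (v x) ^ 2 := by rw [hv2]; linarith only [ha, hb]
  have hQv : form N s v v = lam2 * ∫ x in Ω, (v x) ^ 2 := by
    have hh := hsplit v hvg
    rw [form_comm p v, form_comm m v] at hh
    rw [hh, hv2]
    linarith only [concl2, concl3]
  intro ξ hξX
  have hξg : good N s ξ := ⟨hξX.1.aestronglyMeasurable, hξX.2.1⟩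
  set d : ℝ := (∫ x in Ω, φ₁ x * ξ x) / (∫ x in Ω, φ₁ x * φ₁ x) with hddef
  set ξ' : EuclideanSpace ℝ (Fin N) → ℝ := fun x => 1 * ξ x + (-d) * φ₁ x with hξ'def
  have hξ'g : good N s ξ' := good_lin hs0 hξg hφg 1 (-d)
  have hξ'lp : MemLp ξ' 2 (volume : Measure (EuclideanSpace ℝ (Fin N))) :=
    (hξX.1.const_mul 1).add (hφ₁X.1.const_mul (-d))
  have hξ'2r : MemLp ξ' 2 (volume.restrict Ω) := hξ'lp.restrict Ω
  have hξ'X : memX0 N s Ω ξ' := by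
    refine ⟨hξ'lp, hξ'g.2, ?_⟩
    filter_upwards [hξX.2.2, hφ₁X.2.2] with x hx1 hx2 hxΩ
    rw [hξ'def]
    simp only
    rw [hx1 hxΩ, hx2 hxΩ]
    ring
  have hξ'orth : form N s ξ' φ₁ = 0 := by
    rw [hξ'def, form_lin_left hs0 hξg hφg hφg 1 (-d), form_comm ξ φ₁, hφ₁eig ξ hξX,
      hφ₁eig φ₁ hφ₁X]
    have hcancel : d * (∫ x in Ω, φ₁ x * φ₁ x) = ∫ x in Ω, φ₁ x * ξ x :=
      div_mul_cancel₀ _ hφsqpos.ne'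
    linear_combination (-lam1 : ℝ) * hcancel
  have hIvξ' : Integrable (fun x => v x * ξ' x) (volume.restrict Ω) := int_mul hv2r hξ'2r
  set Iv : ℝ := ∫ x in Ω, v x * ξ' x with hIvdef
  set Mx : ℝ := ∫ x in Ω, (ξ' x) ^ 2 with hMxdef
  set Ee : ℝ := form N s v ξ' - lam2 * Iv with hEdef
  set Rr : ℝ := form N s ξ' ξ' - lam2 * Mx with hRdef
  have hexpand : ∀ t : ℝ, ∫ x in Ω, (v x + t * ξ' x) ^ 2
      = (∫ x in Ω, (v x) ^ 2) + 2 * t * Iv + t ^ 2 * Mx := by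
    intro t
    have hpt : ∀ x, (v x + t * ξ' x) ^ 2
        = (v x) ^ 2 + (2 * t) * (v x * ξ' x) + t ^ 2 * (ξ' x) ^ 2 := fun x => by ring
    calc ∫ x in Ω, (v x + t * ξ' x) ^ 2
        = ∫ x in Ω, ((v x) ^ 2 + (2 * t) * (v x * ξ' x) + t ^ 2 * (ξ' x) ^ 2) := by
          simp only [hpt]
      _ = _ := by
          have hint1 : Integrable (fun x => (v x) ^ 2 + (2 * t) * (v x * ξ' x))
              (volume.restrict Ω) := hv2r.integrable_sq.add (hIvξ'.const_mul (2 * t))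
          have hint2 : Integrable (fun x => t ^ 2 * (ξ' x) ^ 2) (volume.restrict Ω) :=
            (hξ'2r.integrable_sq).const_mul (t ^ 2)
          rw [integral_add hint1 hint2,
            integral_add hv2r.integrable_sq (hIvξ'.const_mul (2 * t)),
            integral_const_mul, integral_const_mul, hIvdef, hMxdef]
  have hkey : ∀ t : ℝ, 0 < ∫ x in Ω, (v x + t * ξ' x) ^ 2 → 0 ≤ 2 * t * Ee + t ^ 2 * Rr := by
    intro t hMt
    set u : EuclideanSpace ℝ (Fin N) → ℝ := fun x => 1 * v x + t * ξ' x with hudef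
    have hug : good N s u := good_lin hs0 hvg hξ'g 1 t
    have huX : memX0 N s Ω u := by
      refine ⟨(hvX.1.const_mul 1).add (hξ'lp.const_mul t), hug.2, ?_⟩
      filter_upwards [hvX.2.2, hξ'X.2.2] with x hx1 hx2 hxΩ
      rw [hudef]
      simp only
      rw [hx1 hxΩ, hx2 hxΩ]
      ring
    have hMu : ∫ x in Ω, (u x) ^ 2 = ∫ x in Ω, (v x + t * ξ' x) ^ 2 := by
      simp only [hudef, one_mul]
    have hMupos : 0 < ∫ x in Ω, (u x) ^ 2 := by rw [hMu]; exact hMt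
    have hune : ¬ ∀ᵐ x : EuclideanSpace ℝ (Fin N), u x = 0 := by
      intro h
      have hzero : ∫ x in Ω, (u x) ^ 2 = 0 := by
        have h' : ∀ᵐ x ∂(volume.restrict Ω), (u x) ^ 2 = (0 : ℝ) := by
          filter_upwards [ae_restrict_of_ae h] with x hx
          rw [hx]; ring
        rw [integral_congr_ae h']
        simp
      linarith only [hzero, hMupos]
    have huφ : form N s u φ₁ = 0 := by
      rw [hudef, form_lin_left hs0 hvg hξ'g hφg 1 t, hvφ, hξ'orth]
      ring
    have hmem : (form N s u u / ∫ x in Ω, (u x) ^ 2) ∈ {t : ℝ | ∃ u, memX0 N s Ω u ∧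
        ¬ (∀ᵐ x, u x = 0) ∧ form N s u φ₁ = 0 ∧ t = form N s u u / ∫ x in Ω, (u x) ^ 2} :=
      ⟨u, huX, hune, huφ, rfl⟩
    have hlow2 : lam2 * ∫ x in Ω, (u x) ^ 2 ≤ form N s u u := by
      have h := csInf_le hbdd hmem
      rw [← hlam2] at h
      exact (le_div_iff₀ hMupos).mp h
    have hQu : form N s u u = form N s v v + 2 * t * form N s v ξ' + t ^ 2 * form N s ξ' ξ' := by
      rw [hudef, form_lin_left hs0 hvg hξ'g (good_lin hs0 hvg hξ'g 1 t) 1 t,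
        form_lin_right hs0 hvg hξ'g hvg 1 t, form_lin_right hs0 hvg hξ'g hξ'g 1 t,
        form_comm ξ' v]
      ring
    have hexp : 2 * t * Ee + t ^ 2 * Rr = form N s u u - lam2 * ∫ x in Ω, (u x) ^ 2 := by
      rw [hEdef, hRdef, hQu, hMu, hexpand t, hQv]
      ring
    rw [hexp]
    linarith only [hlow2]
  -- E = 0
  have hE0 : Ee = 0 := by
    by_contra hne
    set δ : ℝ := min ((∫ x in Ω, (v x) ^ 2) / (2 * |Iv| + |Mx| + 1)) 1 with hδdef
    have hden : (0:ℝ) < 2 * |Iv| + |Mx| + 1 := by positivity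
    have hδpos : 0 < δ := lt_min (div_pos hMv hden) one_pos
    have hδ : ∀ t : ℝ, |t| < δ → 0 < ∫ x in Ω, (v x + t * ξ' x) ^ 2 := by
      intro t ht
      have ht1 : |t| < 1 := lt_of_lt_of_le ht (min_le_right _ _)
      have ht2 : |t| * (2 * |Iv| + |Mx| + 1) < ∫ x in Ω, (v x) ^ 2 := by
        have h := lt_of_lt_of_le ht (min_le_left _ _)
        exact (lt_div_iff₀ hden).mp h
      rw [hexpand t]
      have b1 : t * Iv ≥ -(|t| * |Iv|) := by
        have hb := neg_abs_le (t * Iv)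
        rw [abs_mul] at hb
        exact hb
      have b2 : t ^ 2 * Mx ≥ -(|t| * |Mx|) := by
        have h1 : t ^ 2 * (-|Mx|) ≤ t ^ 2 * Mx :=
          mul_le_mul_of_nonneg_left (neg_abs_le Mx) (sq_nonneg t)
        have h2 : t ^ 2 * |Mx| ≤ |t| * |Mx| := by
          have h3 : t ^ 2 ≤ |t| := by
            have h4 : |t| * |t| ≤ |t| * 1 := mul_le_mul_of_nonneg_left ht1.le (abs_nonneg t)
            rw [← sq_abs, sq]
            linarith only [h4]
          exact mul_le_mul_of_nonneg_right h3 (abs_nonneg Mx)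
        nlinarith only [h1, h2]
      have e1 : |t| * (2 * |Iv| + |Mx| + 1) = 2 * (|t| * |Iv|) + |t| * |Mx| + |t| := by ring
      rw [e1] at ht2
      have e2 : 2 * t * Iv = 2 * (t * Iv) := by ring
      rw [e2]
      linarith only [b1, b2, abs_nonneg t, ht2]
    have hkey2 : ∀ ε : ℝ, 0 < ε → ε < δ → 2 * |Ee| ≤ ε * Rr := by
      intro ε hε hεδ
      have habs : |ε| < δ := by rwa [abs_of_pos hε]
      have habs' : |(-ε)| < δ := by rwa [abs_neg, abs_of_pos hε]
      have k1 := hkey ε (hδ ε habs)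
      have k2 := hkey (-ε) (hδ (-ε) habs')
      rcases le_or_gt Ee 0 with hE | hE
      · rw [abs_of_nonpos hE]
        nlinarith only [k1, hε]
      · rw [abs_of_pos hE]
        nlinarith only [k2, hε]
    have hEabs : 0 < |Ee| := abs_pos.mpr hne
    have hRpos : 0 < Rr := by
      have h := hkey2 (δ / 2) (by linarith only [hδpos]) (by linarith only [hδpos])
      have h2 : 0 < (δ / 2) * Rr := lt_of_lt_of_le (by linarith only [hEabs]) h
      by_contra hc
      push_neg at hc
      have h3 : (δ / 2) * Rr ≤ 0 :=
        mul_nonpos_of_nonneg_of_nonpos (by linarith only [hδpos]) hc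
      linarith only [h2, h3]
    have hεpos : 0 < min (δ / 2) (|Ee| / Rr) := lt_min (by linarith only [hδpos]) (div_pos hEabs hRpos)
    have hεlt : min (δ / 2) (|Ee| / Rr) < δ := lt_of_le_of_lt (min_le_left _ _) (by linarith only [hδpos])
    have hfin := hkey2 _ hεpos hεlt
    have hmin1 : min (δ / 2) (|Ee| / Rr) ≤ |Ee| / Rr := min_le_right _ _
    have hfin2 : 2 * |Ee| ≤ (|Ee| / Rr) * Rr :=
      le_trans hfin (mul_le_mul_of_nonneg_right hmin1 hRpos.le)
    rw [div_mul_cancel₀ _ hRpos.ne'] at hfin2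
    linarith only [hfin2, hEabs]
  -- assemble
  have hformvξ : form N s v ξ = form N s v ξ' + d * form N s v φ₁ := by
    have hξeq : ξ = fun x => 1 * ξ' x + d * φ₁ x := by
      funext x
      rw [hξ'def]
      simp only
      ring
    calc form N s v ξ = form N s v (fun x => 1 * ξ' x + d * φ₁ x) := by rw [← hξeq]
      _ = 1 * form N s v ξ' + d * form N s v φ₁ := form_lin_right hs0 hξ'g hφg hvg 1 d
      _ = _ := by ring
  have hintsplit : ∫ x in Ω, v x * ξ x
      = (∫ x in Ω, v x * ξ' x) + d * ∫ x in Ω, v x * φ₁ x := by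
    have hpt : ∀ x, v x * ξ x = v x * ξ' x + d * (v x * φ₁ x) := by
      intro x
      simp only [hξ'def]
      ring
    calc ∫ x in Ω, v x * ξ x = ∫ x in Ω, (v x * ξ' x + d * (v x * φ₁ x)) := by simp only [hpt]
      _ = _ := by rw [integral_add hIvξ' ((int_mul hv2r hφ2r).const_mul d), integral_const_mul]
  have hvφint : ∫ x in Ω, v x * φ₁ x = 0 := by
    have hcm : ∀ x, v x * φ₁ x = φ₁ x * v x := fun x => mul_comm _ _
    rw [show (∫ x in Ω, v x * φ₁ x) = ∫ x in Ω, φ₁ x * v x from by simp only [hcm]]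
    exact hintφv
  rw [hformvξ, hvφ, hintsplit, hvφint]
  have hfineq : form N s v ξ' - lam2 * (∫ x in Ω, v x * ξ' x) = 0 := by
    rw [hEdef] at hE0
    rw [← hIvdef]
    linarith only [hE0]
  simp only [mul_zero, add_zero]
  linarith only [hfineq]
end SEC

theorem second_eigenfunction_criterion {N : ℕ} (hN : 2 ≤ N) (s : ℝ)
    (hs : s ∈ Set.Ioo (0 : ℝ) 1) (Ω : Set (EuclideanSpace ℝ (Fin N)))
    (hΩo : IsOpen Ω) (hΩb : Bornology.IsBounded Ω)
    (φ₁ : EuclideanSpace ℝ (Fin N) → ℝ) (lam1 lam2 : ℝ)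
    (hφ₁X : memX0 N s Ω φ₁) (hφ₁pos : ∀ x ∈ Ω, 0 < φ₁ x)
    (hφ₁eig : ∀ ξ, memX0 N s Ω ξ → form N s φ₁ ξ = lam1 * ∫ x in Ω, φ₁ x * ξ x)
    (hlam2 : lam2 = sInf {t : ℝ | ∃ u, memX0 N s Ω u ∧ ¬ (∀ᵐ x, u x = 0) ∧
      form N s u φ₁ = 0 ∧ t = form N s u u / ∫ x in Ω, (u x) ^ 2})
    (v : EuclideanSpace ℝ (Fin N) → ℝ) (hvX : memX0 N s Ω v)
    (hvp : ¬ (∀ᵐ x, max (v x) 0 = 0)) (hvm : ¬ (∀ᵐ x, max (-(v x)) 0 = 0))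
    (h1 : form N s v (fun x => max (v x) 0) ≤ lam2 * ∫ x in Ω, (max (v x) 0) ^ 2)
    (h2 : -form N s v (fun x => max (-(v x)) 0) ≤ lam2 * ∫ x in Ω, (max (-(v x)) 0) ^ 2) :
    (∀ ξ, memX0 N s Ω ξ → form N s v ξ = lam2 * ∫ x in Ω, v x * ξ x) ∧
    form N s v (fun x => max (v x) 0) = lam2 * ∫ x in Ω, (max (v x) 0) ^ 2 ∧
    -form N s v (fun x => max (-(v x)) 0) = lam2 * ∫ x in Ω, (max (-(v x)) 0) ^ 2 := by
  obtain ⟨hs0, hs1⟩ := hs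
  have hvg : SEC.good N s v := ⟨hvX.1.aestronglyMeasurable, hvX.2.1⟩
  have hpg := SEC.good_pos_part hs0 hvg
  have hmg := SEC.good_neg_part hs0 hvg
  have hplp : MemLp (fun x => max (v x) 0) 2 (volume : Measure (EuclideanSpace ℝ (Fin N))) := by
    refine MemLp.of_le hvX.1 hpg.1 ?_
    filter_upwards with x
    rw [Real.norm_eq_abs, Real.norm_eq_abs]
    rcases le_total (v x) 0 with h | h
    · rw [max_eq_right h]
      simp [abs_nonneg]
    · rw [max_eq_left h]
  have hmlp : MemLp (fun x => max (-(v x)) 0) 2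
      (volume : Measure (EuclideanSpace ℝ (Fin N))) := by
    refine MemLp.of_le hvX.1 hmg.1 ?_
    filter_upwards with x
    rw [Real.norm_eq_abs, Real.norm_eq_abs]
    rcases le_total (v x) 0 with h | h
    · rw [max_eq_left (neg_nonneg.mpr h), abs_neg]
    · rw [max_eq_right (neg_nonpos.mpr h)]
      simp [abs_nonneg]
  have hpX : memX0 N s Ω (fun x => max (v x) 0) := by
    refine ⟨hplp, hpg.2, ?_⟩
    filter_upwards [hvX.2.2] with x hx hxΩ
    rw [hx hxΩ]
    simp
  have hmX : memX0 N s Ω (fun x => max (-(v x)) 0) := by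
    refine ⟨hmlp, hmg.2, ?_⟩
    filter_upwards [hvX.2.2] with x hx hxΩ
    rw [hx hxΩ]
    simp
  exact SEC.main_aux hN hs0 hs1 hΩo hΩb hφ₁X hφ₁pos hφ₁eig hlam2 v _ _ hvX hpX hmX
    (fun x => (max_zero_sub_max_neg_zero_eq_self (v x)).symm)
    (fun x => le_max_right _ _) (fun x => le_max_right _ _)
    (fun x => by
      rcases le_total (v x) 0 with h | h
      · rw [max_eq_right h, zero_mul]
      · rw [max_eq_right (neg_nonpos.mpr h), mul_zero])
    hvp hvm h1 h2
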